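/- Let z ∈ ℂⁿ with unit-modulus entries, W Hermitian, C = zz* + σW, and m ∈ [n]. Let W^{(m)} be W with its m-th row and column zeroed, C^{(m)} = zz* + σW^{(m)}, and let x̃^{(m)} be a leading eigenvector of C^{(m)} with ‖x̃^{(m)}‖₂ = √n. If n > σ‖W^{(m)}‖₂, then the m-th entry satisfies |x̃^{(m)}ₘ| ≤ n / (n - σ‖W^{(m)}‖₂). -/

import Mathlib

noncomputable section

namespace PhaseSync

open Complex

variable {n : ℕ}

/-- Euclidean (ℓ²) norm on `Fin n → ℂ`. -/
def l2norm (v : Fin n → ℂ) : ℝ :=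
  Real.sqrt (∑ k, ‖v k‖ ^ 2)

/-- Entrywise sup (ℓ∞) norm on `Fin n → ℂ`. -/
def linfnorm (v : Fin n → ℂ) : ℝ :=
  ⨆ k, ‖v k‖

/-- Hermitian inner product `x*y = ∑ₖ conj(xₖ) yₖ`. -/
def herm (x y : Fin n → ℂ) : ℂ :=
  ∑ k, (starRingEnd ℂ) (x k) * y k

/-- Distance up to a global phase: `d₂(x,y) = inf_θ ‖x e^{iθ} - y‖₂`. -/
def d2 (x y : Fin n → ℂ) : ℝ :=
  ⨅ θ : ℝ, l2norm (fun k => Complex.exp (θ * Complex.I) * x k - y k)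

/-- Sup-norm distance up to a global phase. -/
def dinf (x y : Fin n → ℂ) : ℝ :=
  ⨅ θ : ℝ, linfnorm (fun k => Complex.exp (θ * Complex.I) * x k - y k)

/-- ℓ² operator (spectral) norm of a matrix. -/
def opNorm (A : Matrix (Fin n) (Fin n) ℂ) : ℝ :=
  ⨆ u : {u : Fin n → ℂ // l2norm u = 1}, l2norm (A.mulVec u)

/-- Entrywise projection to the unit circle (on nonzero entries). -/
def proj (v : Fin n → ℂ) : Fin n → ℂ :=
  fun k => v k / (‖v k‖ : ℂ)

/-- The rank-one matrix `z z*`. -/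
def outer (z : Fin n → ℂ) : Matrix (Fin n) (Fin n) ℂ :=
  Matrix.of fun i j => z i * (starRingEnd ℂ) (z j)

/-- The operator `ℒ v = (z*v/n) z + (σ/n) W v`. -/
def Lop (z : Fin n → ℂ) (σ : ℝ) (W : Matrix (Fin n) (Fin n) ℂ) (v : Fin n → ℂ) : Fin n → ℂ :=
  (herm z v / (n : ℂ)) • z + (σ / (n : ℝ)) • W.mulVec v

lemma l2norm_eq (v : Fin n → ℂ) : l2norm v = ‖(WithLp.equiv 2 (Fin n → ℂ)).symm v‖ := by
  rw [EuclideanSpace.norm_eq]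
  simp [l2norm]

lemma herm_eq (x y : Fin n → ℂ) :
    herm x y = inner (𝕜 := ℂ) ((WithLp.equiv 2 (Fin n → ℂ)).symm x)
      ((WithLp.equiv 2 (Fin n → ℂ)).symm y) := by
  simp [herm, PiLp.inner_apply, RCLike.inner_apply]
  exact Finset.sum_congr rfl fun _ _ => mul_comm _ _

lemma abs_herm_le (x y : Fin n → ℂ) : ‖herm x y‖ ≤ l2norm x * l2norm y := by
  rw [herm_eq, l2norm_eq, l2norm_eq]
  exact norm_inner_le_norm _ _

lemma l2norm_nonneg (v : Fin n → ℂ) : 0 ≤ l2norm v := Real.sqrt_nonneg _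

lemma l2norm_smul (c : ℂ) (v : Fin n → ℂ) : l2norm (c • v) = ‖c‖ * l2norm v := by
  rw [l2norm_eq, l2norm_eq]
  rw [show (WithLp.equiv 2 (Fin n → ℂ)).symm (c • v)
      = c • (WithLp.equiv 2 (Fin n → ℂ)).symm v from rfl]
  exact norm_smul c _

lemma opNorm_bdd (A : Matrix (Fin n) (Fin n) ℂ) :
    BddAbove (Set.range fun u : {u : Fin n → ℂ // l2norm u = 1} => l2norm (A.mulVec u)) := by
  refine ⟨‖(Matrix.toEuclideanLin A).toContinuousLinearMap‖, ?_⟩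
  rintro x ⟨u, rfl⟩
  have h1 : l2norm (A.mulVec u.1)
      = ‖(Matrix.toEuclideanLin A).toContinuousLinearMap
          ((WithLp.equiv 2 (Fin n → ℂ)).symm u.1)‖ := by
    rw [l2norm_eq]
    congr 1
  show l2norm (A.mulVec u.1) ≤ _
  rw [h1]
  calc ‖(Matrix.toEuclideanLin A).toContinuousLinearMap ((WithLp.equiv 2 (Fin n → ℂ)).symm u.1)‖
      ≤ ‖(Matrix.toEuclideanLin A).toContinuousLinearMap‖ * ‖(WithLp.equiv 2 (Fin n → ℂ)).symm u.1‖ :=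
        ContinuousLinearMap.le_opNorm _ _
    _ = ‖(Matrix.toEuclideanLin A).toContinuousLinearMap‖ := by
        rw [← l2norm_eq, u.2, mul_one]

lemma exists_unit (hn : 0 < n) : ∃ u : Fin n → ℂ, l2norm u = 1 := by
  refine ⟨fun k => if k = ⟨0, hn⟩ then 1 else 0, ?_⟩
  have h : (∑ k : Fin n, ‖((fun k => if k = (⟨0, hn⟩ : Fin n) then (1:ℂ) else 0) k)‖ ^ 2) = 1 := by
    rw [Finset.sum_eq_single (⟨0, hn⟩ : Fin n)]
    · simp
    · intro b _ hb; simp [hb]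
    · simp
  rw [l2norm, h, Real.sqrt_one]

lemma opNorm_nonneg (hn : 0 < n) (A : Matrix (Fin n) (Fin n) ℂ) : 0 ≤ opNorm A := by
  obtain ⟨u, hu⟩ := exists_unit hn
  exact le_trans (l2norm_nonneg (A.mulVec u)) (le_ciSup (opNorm_bdd A) ⟨u, hu⟩)

lemma l2norm_mulVec_le (hn : 0 < n) (A : Matrix (Fin n) (Fin n) ℂ) (v : Fin n → ℂ) :
    l2norm (A.mulVec v) ≤ opNorm A * l2norm v := by
  rcases eq_or_ne v 0 with rfl | hv
  · rw [Matrix.mulVec_zero]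
    have h0 : l2norm (0 : Fin n → ℂ) = 0 := by simp [l2norm]
    rw [h0, mul_zero]
  · have hvpos : 0 < l2norm v := by
      rcases (l2norm_nonneg v).lt_or_eq with h | h
      · exact h
      · exfalso; apply hv
        have hle0 := h.symm
        rw [l2norm, Real.sqrt_eq_zero'] at hle0
        have hall : ∀ k ∈ Finset.univ, ‖v k‖ ^ 2 = 0 := by
          intro k _
          have hnn : ∀ k ∈ (Finset.univ : Finset (Fin n)), 0 ≤ ‖v k‖ ^ 2 :=
            fun k _ => sq_nonneg _
          have hsum0 : ∑ k, ‖v k‖ ^ 2 = 0 := le_antisymm hle0 (Finset.sum_nonneg hnn)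
          exact (Finset.sum_eq_zero_iff_of_nonneg hnn).1 hsum0 k (Finset.mem_univ k)
        funext k
        have := hall k (Finset.mem_univ k)
        simpa using pow_eq_zero_iff (n := 2) (by norm_num) |>.1 this
    set c : ℂ := (((l2norm v)⁻¹ : ℝ) : ℂ) with hc
    have hcabs : ‖c‖ = (l2norm v)⁻¹ := by
      rw [hc]
      exact Complex.norm_of_nonneg (inv_nonneg.2 (l2norm_nonneg v))
    have hu : l2norm (c • v) = 1 := by
      rw [l2norm_smul, hcabs, inv_mul_cancel₀ (ne_of_gt hvpos)]
    have hle : l2norm (A.mulVec (c • v)) ≤ opNorm A := le_ciSup (opNorm_bdd A) ⟨c • v, hu⟩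
    rw [Matrix.mulVec_smul, l2norm_smul, hcabs] at hle
    calc l2norm (A.mulVec v) = (l2norm v) * ((l2norm v)⁻¹ * l2norm (A.mulVec v)) := by
          field_simp
      _ ≤ l2norm v * opNorm A := by
          exact mul_le_mul_of_nonneg_left hle (le_of_lt hvpos)
      _ = opNorm A * l2norm v := mul_comm _ _

lemma herm_conj (x y : Fin n → ℂ) : herm x y = (starRingEnd ℂ) (herm y x) := by
  simp [herm, map_sum, map_mul, mul_comm]

lemma herm_mulVec {C : Matrix (Fin n) (Fin n) ℂ} (hC : C.IsHermitian) (x y : Fin n → ℂ) :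
    herm (C.mulVec x) y = herm x (C.mulVec y) := by
  simp only [herm, Matrix.mulVec, dotProduct, map_sum, map_mul, Finset.sum_mul,
    Finset.mul_sum]
  rw [Finset.sum_comm]
  refine Finset.sum_congr rfl fun j _ => Finset.sum_congr rfl fun k _ => ?_
  have h := hC.apply j k
  rw [show (starRingEnd ℂ) (C k j) = star (C k j) from rfl, h]
  ring

lemma herm_add_right (x y w : Fin n → ℂ) : herm x (y + w) = herm x y + herm x w := by
  simp [herm, mul_add, Finset.sum_add_distrib]

lemma herm_smul_right (x : Fin n → ℂ) (a : ℂ) (y : Fin n → ℂ) :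
    herm x (a • y) = a * herm x y := by
  simp [herm, Finset.mul_sum]
  exact Finset.sum_congr rfl fun k _ => by ring

lemma herm_real_smul_right (x : Fin n → ℂ) (a : ℝ) (y : Fin n → ℂ) :
    herm x (a • y) = (a : ℂ) * herm x y := by
  have : a • y = (a : ℂ) • y := by funext k; simp [Complex.real_smul]
  rw [this, herm_smul_right]

/-- bound for the `m`-th entry of the leading eigenvector of
`C⁽ᵐ⁾ = zz* + σ W⁽ᵐ⁾`, where `W⁽ᵐ⁾` is `W` with its `m`-th row and column zeroed. -/
theorem stmt16 (n : ℕ) (hn : 0 < n) (z : Fin n → ℂ) (hz : ∀ k, ‖z k‖ = 1)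
    (W : Matrix (Fin n) (Fin n) ℂ) (hW : W.IsHermitian) (σ : ℝ) (hσ : 0 ≤ σ) (m : Fin n)
    (Wm : Matrix (Fin n) (Fin n) ℂ)
    (hWmdef : ∀ i j, Wm i j = if i = m ∨ j = m then 0 else W i j)
    (xt : Fin n → ℂ) (lam : ℝ)
    (heig : (outer z + σ • Wm).mulVec xt = (lam : ℂ) • xt)
    (hxt : xt ≠ 0)
    (hmax : ∀ ν : ℝ, (∃ v : Fin n → ℂ, v ≠ 0 ∧ (outer z + σ • Wm).mulVec v = (ν : ℂ) • v) →
      ν ≤ lam)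
    (hnorm : l2norm xt = Real.sqrt n)
    (hgap : σ * opNorm Wm < n) :
    ‖xt m‖ ≤ n / (n - σ * opNorm Wm) := by
  classical
  set S := opNorm Wm with hS
  set C : Matrix (Fin n) (Fin n) ℂ := outer z + σ • Wm with hCdef
  -- Wm is Hermitian
  have hWmH : Wm.IsHermitian := by
    apply Matrix.IsHermitian.ext
    intro i j
    rw [hWmdef j i, hWmdef i j]
    by_cases h1 : i = m ∨ j = m
    · simp [h1, Or.comm.mp h1]
    · have h2 : ¬ (j = m ∨ i = m) := fun h => h1 (Or.comm.mp h)
      simp only [h1, h2, if_neg, if_false]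
      exact hW.apply i j
  -- C is Hermitian
  have houterH : (outer z).IsHermitian := by
    apply Matrix.IsHermitian.ext
    intro i j
    simp [outer, Matrix.of_apply, star_mul', mul_comm]
  have hsWm : (σ • Wm).IsHermitian := by
    apply Matrix.IsHermitian.ext
    intro i j
    simp only [Matrix.smul_apply, star_smul, star_trivial]
    rw [hWmH.apply i j]
  have hCH : C.IsHermitian := houterH.add hsWm
  -- herm z z = n and l2norm z = √n
  have hzz : herm z z = (n : ℂ) := by
    have h1 : ∀ k, (starRingEnd ℂ) (z k) * z k = 1 := by
      intro k
      rw [mul_comm, Complex.mul_conj]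
      norm_cast
      rw [← Complex.sq_norm, hz k]; norm_num
    simp [herm, h1]
  have hlz : l2norm z = Real.sqrt n := by
    have h1 : ∀ k, ‖z k‖ ^ 2 = 1 := fun k => by rw [hz k]; norm_num
    simp [l2norm, h1]
  -- every eigenvalue of C is ≤ lam
  set b := hCH.eigenvectorBasis with hb
  set μ := hCH.eigenvalues with hμ
  set V : Fin n → (Fin n → ℂ) := fun i => ⇑(b i) with hV
  have hVeig : ∀ i, C.mulVec (V i) = μ i • V i := fun i => hCH.mulVec_eigenvectorBasis i
  have heigle : ∀ i, μ i ≤ lam := by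
    intro i
    apply hmax
    refine ⟨V i, ?_, ?_⟩
    · intro h0
      exact b.orthonormal.ne_zero i ((WithLp.ofLp_eq_zero 2).1 h0)
    · rw [hVeig i]
      funext k
      simp [Complex.real_smul]
  -- orthonormal expansion
  have hbridge : ∀ (x y : Fin n → ℂ), ∑ i, herm x (V i) * herm (V i) y = herm x y := by
    intro x y
    have h := b.sum_inner_mul_inner ((WithLp.equiv 2 (Fin n → ℂ)).symm x)
      ((WithLp.equiv 2 (Fin n → ℂ)).symm y)
    calc ∑ i, herm x (V i) * herm (V i) y
        = ∑ i, (inner (𝕜 := ℂ) ((WithLp.equiv 2 (Fin n → ℂ)).symm x) (b i)) *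
            (inner (𝕜 := ℂ) (b i) ((WithLp.equiv 2 (Fin n → ℂ)).symm y)) := by
          refine Finset.sum_congr rfl fun i _ => ?_
          rw [herm_eq x (V i), herm_eq (V i) y]
          rfl
      _ = herm x y := by rw [h, herm_eq]
  -- the m-th row of Wm vanishes
  have hWmrow : ∀ j, Wm m j = 0 := fun j => by rw [hWmdef]; simp
  -- Rayleigh upper bound: re (herm z (C z)) ≤ lam * n
  have hkey : ∀ i, herm (V i) (C.mulVec z) = (μ i : ℂ) * herm (V i) z := by
    intro i
    rw [← herm_mulVec hCH, hVeig i, herm_conj, herm_real_smul_right, map_mul]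
    rw [← herm_conj]
    simp
  have hsum2 : ∑ i, Complex.normSq (herm (V i) z) = n := by
    have h := hbridge z z
    rw [hzz] at h
    have h2 : ∑ i, herm z (V i) * herm (V i) z = ∑ i, (Complex.normSq (herm (V i) z) : ℂ) := by
      refine Finset.sum_congr rfl fun i _ => ?_
      rw [herm_conj z (V i), mul_comm, Complex.mul_conj]
    rw [h2] at h
    have := congrArg Complex.re h
    simpa using this
  have hray : (herm z (C.mulVec z)).re ≤ lam * n := by
    have h := hbridge z (C.mulVec z)
    have h2 : ∑ i, herm z (V i) * herm (V i) (C.mulVec z)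
        = ∑ i, (μ i : ℂ) * (Complex.normSq (herm (V i) z) : ℂ) := by
      refine Finset.sum_congr rfl fun i _ => ?_
      rw [hkey i, herm_conj z (V i), ← mul_assoc, mul_comm ((starRingEnd ℂ) (herm (V i) z)),
        mul_assoc]
      congr 1
      rw [mul_comm, Complex.mul_conj]
    rw [h2] at h
    rw [← h]
    rw [Complex.re_sum]
    have h3 : ∀ i ∈ Finset.univ, ((μ i : ℂ) * (Complex.normSq (herm (V i) z) : ℂ)).re
        ≤ lam * Complex.normSq (herm (V i) z) := by
      intro i _
      rw [← Complex.ofReal_mul, Complex.ofReal_re]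
      exact mul_le_mul_of_nonneg_right (heigle i) (Complex.normSq_nonneg _)
    calc (∑ i, ((μ i : ℂ) * (Complex.normSq (herm (V i) z) : ℂ)).re)
        ≤ ∑ i, lam * Complex.normSq (herm (V i) z) := Finset.sum_le_sum h3
      _ = lam * ∑ i, Complex.normSq (herm (V i) z) := by rw [Finset.mul_sum]
      _ = lam * n := by rw [hsum2]
  -- Rayleigh lower bound
  have houterz : (outer z).mulVec z = herm z z • z := by
    funext i
    simp only [outer, Matrix.mulVec, dotProduct, Matrix.of_apply, Pi.smul_apply,
      smul_eq_mul, herm, Finset.sum_mul, Finset.mul_sum]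
    exact Finset.sum_congr rfl fun j _ => by ring
  have hCz : herm z (C.mulVec z) = (n : ℂ) * (n : ℂ) + (σ : ℂ) * herm z (Wm.mulVec z) := by
    rw [hCdef, Matrix.add_mulVec, herm_add_right, houterz, hzz, herm_smul_right,
      Matrix.smul_mulVec, herm_real_smul_right, hzz]
  have habsWz : ‖herm z (Wm.mulVec z)‖ ≤ n * S := by
    calc ‖herm z (Wm.mulVec z)‖ ≤ l2norm z * l2norm (Wm.mulVec z) := abs_herm_le _ _
      _ ≤ l2norm z * (S * l2norm z) :=
          mul_le_mul_of_nonneg_left (l2norm_mulVec_le hn Wm z) (l2norm_nonneg z)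
      _ = n * S := by
          rw [hlz]
          rw [show Real.sqrt n * (S * Real.sqrt n) = Real.sqrt n * Real.sqrt n * S by ring]
          rw [Real.mul_self_sqrt (Nat.cast_nonneg n)]
  have hlow : (n : ℝ) * n - σ * (n * S) ≤ (herm z (C.mulVec z)).re := by
    rw [hCz]
    rw [Complex.add_re]
    have h1 : ((n : ℂ) * (n : ℂ)).re = (n : ℝ) * n := by norm_cast
    have h2 : ((σ : ℂ) * herm z (Wm.mulVec z)).re = σ * (herm z (Wm.mulVec z)).re := by
      simp [Complex.mul_re]
    rw [h1, h2]
    have h3 : -(n * S) ≤ (herm z (Wm.mulVec z)).re := by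
      have := (abs_le.1 (Complex.abs_re_le_norm (herm z (Wm.mulVec z)))).1
      linarith [habsWz]
    nlinarith
  -- lam ≥ n - σ S and lam > 0
  have hSnn : 0 ≤ S := opNorm_nonneg hn Wm
  have hlamge : (n : ℝ) - σ * S ≤ lam := by
    have hnpos : (0 : ℝ) < n := by exact_mod_cast hn
    have h := le_trans hlow hray
    nlinarith
  have hgap' : (0 : ℝ) < (n : ℝ) - σ * S := by linarith [hgap]
  have hlampos : (0 : ℝ) < lam := lt_of_lt_of_le hgap' hlamge
  -- entry m
  have hm : (lam : ℂ) * xt m = z m * herm z xt := by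
    have h := congrFun heig m
    have hL : C.mulVec xt m = z m * herm z xt := by
      rw [hCdef, Matrix.add_mulVec]
      have hWmz : (σ • Wm).mulVec xt m = 0 := by
        rw [Matrix.smul_mulVec]
        have : Wm.mulVec xt m = 0 := by
          simp [Matrix.mulVec, dotProduct, hWmrow]
        simp [this]
      rw [Pi.add_apply, hWmz, add_zero]
      simp only [outer, Matrix.mulVec, dotProduct, Matrix.of_apply, herm, Finset.mul_sum]
      exact Finset.sum_congr rfl fun j _ => by ring
    rw [hL] at h
    simpa using h.symm
  have habs : lam * ‖xt m‖ ≤ n := by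
    have h := congrArg (‖·‖) hm
    rw [norm_mul, norm_mul, Complex.norm_of_nonneg hlampos.le, hz m, one_mul] at h
    rw [h]
    calc ‖herm z xt‖ ≤ l2norm z * l2norm xt := abs_herm_le _ _
      _ = Real.sqrt n * Real.sqrt n := by rw [hlz, hnorm]
      _ = n := Real.mul_self_sqrt (Nat.cast_nonneg n)
  have h1 : ‖xt m‖ ≤ (n : ℝ) / lam := by
    rw [le_div_iff₀ hlampos]
    linarith [habs]
  calc ‖xt m‖ ≤ (n : ℝ) / lam := h1
    _ ≤ (n : ℝ) / ((n : ℝ) - σ * S) := by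
        apply div_le_div_of_nonneg_left (Nat.cast_nonneg n) hgap' hlamge

end PhaseSync
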